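/- Let (A,B) be an n×n real symmetric matrix pencil with B positive definite, let E, F be n×n real symmetric matrices, and set Ã = A + E, B̃ = B + F, with B̃ positive definite. Let (λ_i, u_i), i = 1,…,n, be the eigenpairs of (A,B) with u_i ≠ 0, and let λ̃_1, …, λ̃_n be the eigenvalues of (Ã, B̃). Then for every i = 1, …, n, min_j |λ̃_j − λ_i| ≤ (1/λ_min(B̃)) · ( ‖E u_i‖₂/‖u_i‖₂ + |λ_i|·‖F u_i‖₂/‖u_i‖₂ ), where λ_min(B̃) is the smallest eigenvalue of B̃. -/

import Mathlib

open Matrix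

/-- The Euclidean norm of a vector. -/
noncomputable def euclNorm {m : Type*} [Fintype m] (v : m → ℝ) : ℝ :=
  Real.sqrt (∑ i, (v i) ^ 2)

open scoped MatrixOrder in
/-- The `k`-th smallest generalized eigenvalue (counted with multiplicity) of the
symmetric pencil `(A, B)` with `B` positive definite, i.e. the `k`-th smallest root of
`det (A - λ B) = 0`.  It is defined as the `k`-th smallest eigenvalue of the Hermitian
matrix `√(B⁻¹) * A * √(B⁻¹)`, which is similar to `B⁻¹ * A`.  Junk value `0` is returned
if `A` is not symmetric or `B` is not positive definite. -/
noncomputable def genEig {m : Type*} [Fintype m] [DecidableEq m]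
    (A B : Matrix m m ℝ) (k : Fin (Fintype.card m)) : ℝ :=
  letI := Classical.propDecidable
  if h : A.IsHermitian ∧ B.PosDef then
    let S : Matrix m m ℝ := CFC.sqrt B⁻¹
    have hS : S.IsHermitian := (CFC.sqrt_nonneg B⁻¹).posSemidef.isHermitian
    have hC : (S * A * S).IsHermitian := by
      show (S * A * S)ᴴ = S * A * S
      rw [conjTranspose_mul, conjTranspose_mul, hS.eq, h.1.eq, Matrix.mul_assoc]
    let f : Fin (Fintype.card m) → ℝ := hC.eigenvalues₀
    f (Tuple.sort f k)
  else 0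

/-- The `k`-th smallest generalized eigenvalue of a pencil of `n × n` matrices,
indexed by `Fin n`.  `genEigFin A B 0` is the smallest one, `λ_1(A,B)`, and
`genEigFin A B (Fin.last _)` is the largest one, `λ_n(A,B)`. -/
noncomputable def genEigFin {n : ℕ} (A B : Matrix (Fin n) (Fin n) ℝ) (k : Fin n) : ℝ :=
  genEig A B (Fin.cast (Fintype.card_fin n).symm k)

/-- The (row-sum) lumping operator: `lump B` is the diagonal matrix whose `i`-th
diagonal entry is the sum of the absolute values of the entries of the `i`-th row of `B`. -/
noncomputable def lump {m : Type*} [Fintype m] [DecidableEq m]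
    (B : Matrix m m ℝ) : Matrix m m ℝ :=
  Matrix.diagonal fun i => ∑ j, |B i j|

/-- The banded part `D_i` of a matrix: it keeps all sub- and super-diagonals of index
smaller than `i` (i.e. the entries with `|j - k| < i`) and sets the rest to zero. -/
def diagBand {n : ℕ} (B : Matrix (Fin n) (Fin n) ℝ) (i : ℕ) : Matrix (Fin n) (Fin n) ℝ :=
  Matrix.of fun j k => if |((j : ℕ) : ℤ) - ((k : ℕ) : ℤ)| < (i : ℤ) then B j k else 0

/-- The lumped preconditioner `P_i = D_i + 𝓛(R_i)` where `B = D_i + R_i`, `D_i` being the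
banded part of `B` of bandwidth `i` and `R_i` the remainder. -/
noncomputable def precond {n : ℕ} (B : Matrix (Fin n) (Fin n) ℝ) (i : ℕ) :
    Matrix (Fin n) (Fin n) ℝ :=
  diagBand B i + lump (B - diagBand B i)

/-! ### Auxiliary lemmas -/

open scoped MatrixOrder

section euclNormLemmas
variable {m : Type*} [Fintype m]

lemma euclNorm_eq_norm (v : m → ℝ) :
    euclNorm v = ‖(WithLp.equiv 2 (m → ℝ)).symm v‖ := by
  rw [EuclideanSpace.norm_eq, euclNorm]
  congr 1
  exact Finset.sum_congr rfl fun i _ => by simp [Real.norm_eq_abs, sq_abs]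

lemma euclNorm_nonneg (v : m → ℝ) : 0 ≤ euclNorm v := Real.sqrt_nonneg _

lemma euclNorm_sq (v : m → ℝ) : euclNorm v ^ 2 = v ⬝ᵥ v := by
  rw [euclNorm, Real.sq_sqrt (by positivity)]
  simp [dotProduct, sq]

lemma euclNorm_pos {v : m → ℝ} (hv : v ≠ 0) : 0 < euclNorm v := by
  rcases (euclNorm_nonneg v).lt_or_eq with h | h
  · exact h
  · exfalso
    apply hv
    rw [← dotProduct_self_eq_zero (v := v), ← euclNorm_sq, ← h]
    ring

lemma euclNorm_smul (c : ℝ) (v : m → ℝ) : euclNorm (c • v) = |c| * euclNorm v := by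
  simp only [euclNorm, Pi.smul_apply, smul_eq_mul, mul_pow, ← Finset.mul_sum]
  rw [Real.sqrt_mul (sq_nonneg c), Real.sqrt_sq_eq_abs]

lemma euclNorm_add_le (a b : m → ℝ) : euclNorm (a + b) ≤ euclNorm a + euclNorm b := by
  rw [euclNorm_eq_norm, euclNorm_eq_norm, euclNorm_eq_norm]
  exact norm_add_le _ _

end euclNormLemmas

section spectralLemmas
variable {m : Type*} [Fintype m] [DecidableEq m]
variable {M : Matrix m m ℝ} (hM : M.IsHermitian)

lemma herm_dot_eq (x y : m → ℝ) :
    x ⬝ᵥ y = ∑ j, (⇑(hM.eigenvectorBasis j) ⬝ᵥ x) * (⇑(hM.eigenvectorBasis j) ⬝ᵥ y) := by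
  set b := hM.eigenvectorBasis with hb
  have key : ∀ p q : EuclideanSpace ℝ m,
      (inner ℝ p q : ℝ) = ∑ j, (inner ℝ (b j) p : ℝ) * (inner ℝ (b j) q : ℝ) := by
    intro p q
    rw [← LinearIsometryEquiv.inner_map_map b.repr p q, PiLp.inner_apply]
    refine Finset.sum_congr rfl fun j _ => ?_
    rw [b.repr_apply_apply, b.repr_apply_apply]
    simp [RCLike.inner_apply, mul_comm]
  have := key ((WithLp.equiv 2 (m → ℝ)).symm x) ((WithLp.equiv 2 (m → ℝ)).symm y)
  simpa [PiLp.inner_apply, RCLike.inner_apply, dotProduct, mul_comm] using this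

lemma herm_basis_dot_mulVec (j : m) (x : m → ℝ) :
    ⇑(hM.eigenvectorBasis j) ⬝ᵥ (M *ᵥ x)
      = hM.eigenvalues j * (⇑(hM.eigenvectorBasis j) ⬝ᵥ x) := by
  have ht : Mᵀ = M := by
    rw [← conjTranspose_eq_transpose_of_trivial]; exact hM.eq
  calc ⇑(hM.eigenvectorBasis j) ⬝ᵥ (M *ᵥ x)
      = (Mᵀ *ᵥ ⇑(hM.eigenvectorBasis j)) ⬝ᵥ x := by
        rw [mulVec_transpose, ← dotProduct_mulVec]
    _ = (hM.eigenvalues j • ⇑(hM.eigenvectorBasis j)) ⬝ᵥ x := by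
        rw [ht, hM.mulVec_eigenvectorBasis]
    _ = hM.eigenvalues j * (⇑(hM.eigenvectorBasis j) ⬝ᵥ x) := by
        rw [smul_dotProduct, smul_eq_mul]

lemma herm_quad_lower (c : ℝ) (hc : ∀ j, c ≤ hM.eigenvalues j) (x : m → ℝ) :
    c * (x ⬝ᵥ x) ≤ x ⬝ᵥ (M *ᵥ x) := by
  rw [herm_dot_eq hM x x, herm_dot_eq hM x (M *ᵥ x), Finset.mul_sum]
  refine Finset.sum_le_sum fun j _ => ?_
  rw [herm_basis_dot_mulVec hM]
  nlinarith [hc j, sq_nonneg (⇑(hM.eigenvectorBasis j) ⬝ᵥ x)]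

omit [DecidableEq m] in
lemma herm_symm_dot {S : Matrix m m ℝ} (hS : S.IsHermitian) (y z : m → ℝ) :
    (S *ᵥ y) ⬝ᵥ z = y ⬝ᵥ (S *ᵥ z) := by
  have ht : Sᵀ = S := by
    rw [← conjTranspose_eq_transpose_of_trivial]; exact hS.eq
  calc (S *ᵥ y) ⬝ᵥ z = (Sᵀ *ᵥ y) ⬝ᵥ z := by rw [ht]
    _ = (y ᵥ* S) ⬝ᵥ z := by rw [mulVec_transpose]
    _ = y ⬝ᵥ (S *ᵥ z) := by rw [dotProduct_mulVec]

lemma eigenvalues₀_congr {M M' : Matrix m m ℝ} (h : M = M')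
    (hM : M.IsHermitian) (hM' : M'.IsHermitian) :
    hM.eigenvalues₀ = hM'.eigenvalues₀ := by subst h; rfl

lemma eigenvalues₀_eq_eigenvalues {M : Matrix m m ℝ} (hM : M.IsHermitian)
    (k : Fin (Fintype.card m)) :
    hM.eigenvalues₀ k
      = hM.eigenvalues ((Fintype.equivOfCardEq (Fintype.card_fin _)) k) := by
  rw [Matrix.IsHermitian.eigenvalues, Equiv.symm_apply_apply]

end spectralLemmas

set_option maxHeartbeats 1000000 in
lemma genEig_spec {m : Type*} [Fintype m] [DecidableEq m] {A B : Matrix m m ℝ}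
    (hA : A.IsHermitian) (hB : B.PosDef) :
    ∃ (M : Matrix m m ℝ) (hM : M.IsHermitian),
      M = CFC.sqrt B⁻¹ * A * CFC.sqrt B⁻¹ ∧
      ∀ k, genEig A B k = hM.eigenvalues₀ (Tuple.sort hM.eigenvalues₀ k) := by
  letI := Classical.propDecidable
  have h : A.IsHermitian ∧ B.PosDef := ⟨hA, hB⟩
  have hS : (CFC.sqrt B⁻¹ : Matrix m m ℝ).IsHermitian :=
    (CFC.sqrt_nonneg B⁻¹).posSemidef.isHermitian
  have hC : (CFC.sqrt B⁻¹ * A * CFC.sqrt B⁻¹).IsHermitian := by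
    show _ᴴ = _
    rw [conjTranspose_mul, conjTranspose_mul, hS.eq, h.1.eq, Matrix.mul_assoc]
  refine ⟨_, hC, by congr!, fun k => ?_⟩
  unfold genEig
  rw [dif_pos h]
  dsimp only
  congr!

/-- Bauer–Fike type bound, first form. -/
theorem stmt_10 {n : ℕ} (A B E F : Matrix (Fin (n + 1)) (Fin (n + 1)) ℝ)
    (hA : A.IsHermitian) (hB : B.PosDef) (hE : E.IsHermitian) (hF : F.IsHermitian)
    (hBt : (B + F).PosDef)
    (lam : Fin (n + 1) → ℝ) (u : Fin (n + 1) → Fin (n + 1) → ℝ)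
    (hu : ∀ i, u i ≠ 0) (heig : ∀ i, A *ᵥ u i = lam i • (B *ᵥ u i)) :
    ∀ i, ∃ j, |genEigFin (A + E) (B + F) j - lam i| ≤
      (1 / genEigFin (B + F) 1 0) *
        (euclNorm (E *ᵥ u i) / euclNorm (u i) +
          |lam i| * (euclNorm (F *ᵥ u i) / euclNorm (u i))) := by
  intro i
  have hAt : (A + E).IsHermitian := hA.add hE
  set S : Matrix (Fin (n+1)) (Fin (n+1)) ℝ := CFC.sqrt (B + F)⁻¹ with hSdef
  have hS : S.IsHermitian := (CFC.sqrt_nonneg (B + F)⁻¹).posSemidef.isHermitian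
  have hSS : S * S = (B + F)⁻¹ := CFC.sqrt_mul_sqrt_self _ (hBt.inv).posSemidef.nonneg
  have hC : (S * (A + E) * S).IsHermitian := by
    show _ᴴ = _
    rw [conjTranspose_mul, conjTranspose_mul, hS.eq, hAt.eq, Matrix.mul_assoc]
  have hdet : IsUnit (B + F).det := hBt.det_pos.ne'.isUnit
  have hSdet : IsUnit S.det := by
    have h2 : S.det * S.det = ((B + F)⁻¹).det := by rw [← det_mul, hSS]
    have h3 : IsUnit (((B + F)⁻¹).det) := (hBt.inv).det_pos.ne'.isUnit
    rw [← h2] at h3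
    exact isUnit_of_mul_isUnit_left h3
  have hSBS : S * (B + F) * S = 1 := by
    have h1 : S * (S * (B + F)) = 1 := by
      rw [← Matrix.mul_assoc, hSS, Matrix.nonsing_inv_mul _ hdet]
    exact mul_eq_one_comm.mp h1
  obtain ⟨w, hSw⟩ : ∃ w : Fin (n+1) → ℝ, S *ᵥ w = u i :=
    ⟨S⁻¹ *ᵥ u i, by rw [mulVec_mulVec, Matrix.mul_nonsing_inv _ hSdet, one_mulVec]⟩
  obtain ⟨r, hr⟩ : ∃ r : Fin (n+1) → ℝ, r = E *ᵥ u i + (-lam i) • (F *ᵥ u i) := ⟨_, rfl⟩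
  have hres : (A + E) *ᵥ u i - lam i • ((B + F) *ᵥ u i) = r := by
    rw [hr, add_mulVec, add_mulVec, heig i, smul_add]
    module
  have hkey : (S * (A + E) * S) *ᵥ w - lam i • w = S *ᵥ r := by
    have h1 : (S * (A + E) * S) *ᵥ w = S *ᵥ ((A + E) *ᵥ u i) := by
      rw [← hSw, mulVec_mulVec, mulVec_mulVec]
    have h2 : w = S *ᵥ ((B + F) *ᵥ u i) := by
      rw [← hSw, mulVec_mulVec, mulVec_mulVec, hSBS, one_mulVec]
    rw [h1, h2, ← mulVec_smul, ← mulVec_sub, hres]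
  -- pick the closest eigenvalue of S(A+E)S to lam i
  obtain ⟨k, -, hk⟩ := Finset.exists_min_image Finset.univ
    (fun j => (hC.eigenvalues j - lam i) ^ 2) ⟨0, Finset.mem_univ _⟩
  -- Parseval computations
  have hcoef : ∀ j, ⇑(hC.eigenvectorBasis j) ⬝ᵥ (S *ᵥ r)
      = (hC.eigenvalues j - lam i) * (⇑(hC.eigenvectorBasis j) ⬝ᵥ w) := by
    intro j
    rw [← hkey, dotProduct_sub, herm_basis_dot_mulVec hC, dotProduct_smul, smul_eq_mul]
    ring
  have hSr : (S *ᵥ r) ⬝ᵥ (S *ᵥ r)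
      = ∑ j, ((hC.eigenvalues j - lam i) * (⇑(hC.eigenvectorBasis j) ⬝ᵥ w)) ^ 2 := by
    rw [herm_dot_eq hC]
    exact Finset.sum_congr rfl fun j _ => by rw [hcoef j]; ring
  have hww : w ⬝ᵥ w = ∑ j, (⇑(hC.eigenvectorBasis j) ⬝ᵥ w) ^ 2 := by
    rw [herm_dot_eq hC]
    exact Finset.sum_congr rfl fun j _ => (sq _).symm
  have hmain : (hC.eigenvalues k - lam i) ^ 2 * (w ⬝ᵥ w) ≤ (S *ᵥ r) ⬝ᵥ (S *ᵥ r) := by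
    rw [hSr, hww, Finset.mul_sum]
    refine Finset.sum_le_sum fun j _ => ?_
    rw [mul_pow]
    exact mul_le_mul_of_nonneg_right (hk j (Finset.mem_univ j)) (sq_nonneg _)
  -- the smallest eigenvalue of B + F
  set μ0 := genEigFin (B + F) 1 0 with hμ0
  obtain ⟨M1, hM1h, hM1eq, hgen1⟩ := genEig_spec hBt.1 Matrix.PosDef.one
  have hsq1 : (1 : Matrix (Fin (n+1)) (Fin (n+1)) ℝ)
      = CFC.sqrt (1 : Matrix (Fin (n+1)) (Fin (n+1)) ℝ)⁻¹ := by
    rw [inv_one, CFC.sqrt_one]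
  have hM1B : M1 = B + F := by rw [hM1eq, ← hsq1, one_mul, mul_one]
  have hf1 : hM1h.eigenvalues₀ = hBt.1.eigenvalues₀ := eigenvalues₀_congr hM1B hM1h hBt.1
  have hμ0eq : μ0 = hBt.1.eigenvalues₀
      (Tuple.sort hBt.1.eigenvalues₀ (Fin.cast (Fintype.card_fin (n+1)).symm 0)) := by
    rw [hμ0, genEigFin, hgen1, hf1]
  have hμpos : 0 < μ0 := by
    rw [hμ0eq, eigenvalues₀_eq_eigenvalues]
    exact hBt.eigenvalues_pos _
  have hμle₀ : ∀ kk, μ0 ≤ hBt.1.eigenvalues₀ kk := by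
    intro kk
    rw [hμ0eq]
    have hm := Tuple.monotone_sort hBt.1.eigenvalues₀
      (a := Fin.cast (Fintype.card_fin (n+1)).symm 0)
      (b := (Tuple.sort hBt.1.eigenvalues₀)⁻¹ kk)
      (by simp [Fin.le_def])
    simpa [Function.comp, Equiv.Perm.coe_inv, Equiv.apply_symm_apply] using hm
  have hμlev : ∀ v : Fin (n+1) → ℝ, μ0 * (v ⬝ᵥ v) ≤ v ⬝ᵥ ((B + F) *ᵥ v) := by
    intro v
    refine herm_quad_lower hBt.1 μ0 (fun j => ?_) v
    have h4 := hμle₀ ((Fintype.equivOfCardEq (Fintype.card_fin _)).symm j)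
    rwa [eigenvalues₀_eq_eigenvalues, Equiv.apply_symm_apply] at h4
  have hS2 : ∀ y : Fin (n+1) → ℝ, μ0 * ((S *ᵥ y) ⬝ᵥ (S *ᵥ y)) ≤ y ⬝ᵥ y := by
    intro y
    have h1 := hμlev (S *ᵥ y)
    have h2 : (S *ᵥ y) ⬝ᵥ ((B + F) *ᵥ (S *ᵥ y)) = y ⬝ᵥ y := by
      rw [herm_symm_dot hS, mulVec_mulVec, mulVec_mulVec, hSBS, one_mulVec]
    rw [← h2]
    exact h1
  -- numeric assembly
  have hu2 : μ0 * (u i ⬝ᵥ u i) ≤ w ⬝ᵥ w := by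
    have h5 := hS2 w; rwa [hSw] at h5
  have hr2 : μ0 * ((S *ᵥ r) ⬝ᵥ (S *ᵥ r)) ≤ r ⬝ᵥ r := hS2 r
  have hupos : 0 < euclNorm (u i) := euclNorm_pos (hu i)
  have huu : 0 < u i ⬝ᵥ u i := by rw [← euclNorm_sq]; positivity
  have hww0 : 0 ≤ w ⬝ᵥ w := by rw [← euclNorm_sq]; positivity
  have hSr0 : 0 ≤ (S *ᵥ r) ⬝ᵥ (S *ᵥ r) := by rw [← euclNorm_sq]; positivity
  have h4 : (hC.eigenvalues k - lam i) ^ 2 * (μ0 ^ 2 * (u i ⬝ᵥ u i)) ≤ r ⬝ᵥ r := by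
    have c1 : (hC.eigenvalues k - lam i) ^ 2 * (μ0 * (u i ⬝ᵥ u i)) ≤ (S *ᵥ r) ⬝ᵥ (S *ᵥ r) :=
      le_trans (by nlinarith [hu2, sq_nonneg (hC.eigenvalues k - lam i)]) hmain
    nlinarith [mul_le_mul_of_nonneg_left c1 hμpos.le, hr2]
  have habs : |hC.eigenvalues k - lam i| * (μ0 * euclNorm (u i)) ≤ euclNorm r := by
    have h5 : (|hC.eigenvalues k - lam i| * (μ0 * euclNorm (u i))) ^ 2 ≤ euclNorm r ^ 2 := by
      rw [mul_pow, mul_pow, sq_abs, euclNorm_sq, euclNorm_sq]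
      exact h4
    have h6 : 0 ≤ |hC.eigenvalues k - lam i| * (μ0 * euclNorm (u i)) := by positivity
    calc |hC.eigenvalues k - lam i| * (μ0 * euclNorm (u i))
        = Real.sqrt ((|hC.eigenvalues k - lam i| * (μ0 * euclNorm (u i))) ^ 2) :=
          (Real.sqrt_sq h6).symm
      _ ≤ Real.sqrt (euclNorm r ^ 2) := Real.sqrt_le_sqrt h5
      _ = euclNorm r := Real.sqrt_sq (euclNorm_nonneg r)
  have hfinal : |hC.eigenvalues k - lam i| ≤ euclNorm r / (μ0 * euclNorm (u i)) := by
    rw [le_div_iff₀ (by positivity)]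
    exact habs
  have htri : euclNorm r ≤ euclNorm (E *ᵥ u i) + |lam i| * euclNorm (F *ᵥ u i) := by
    rw [hr]
    refine (euclNorm_add_le _ _).trans ?_
    rw [euclNorm_smul, abs_neg]
  -- produce the index j
  obtain ⟨M2, hM2h, hM2eq, hgen2⟩ := genEig_spec hAt hBt
  have hf2 : hM2h.eigenvalues₀ = hC.eigenvalues₀ := by
    refine eigenvalues₀_congr ?_ hM2h hC
    rw [hM2eq, hSdef]
  set k' : Fin (Fintype.card (Fin (n+1))) :=
    (Fintype.equivOfCardEq (Fintype.card_fin _)).symm k with hk'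
  refine ⟨Fin.cast (Fintype.card_fin (n+1)) ((Tuple.sort hM2h.eigenvalues₀)⁻¹ k'), ?_⟩
  have hgj : genEigFin (A + E) (B + F)
      (Fin.cast (Fintype.card_fin (n+1)) ((Tuple.sort hM2h.eigenvalues₀)⁻¹ k'))
      = hC.eigenvalues k := by
    rw [genEigFin]
    have hcc : Fin.cast (Fintype.card_fin (n+1)).symm
        (Fin.cast (Fintype.card_fin (n+1)) ((Tuple.sort hM2h.eigenvalues₀)⁻¹ k'))
        = (Tuple.sort hM2h.eigenvalues₀)⁻¹ k' := by
      apply Fin.ext; simp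
    rw [hcc, hgen2, Equiv.Perm.coe_inv, Equiv.apply_symm_apply, hf2, hk', eigenvalues₀_eq_eigenvalues,
      Equiv.apply_symm_apply]
  rw [hgj]
  calc |hC.eigenvalues k - lam i| ≤ euclNorm r / (μ0 * euclNorm (u i)) := hfinal
    _ ≤ (euclNorm (E *ᵥ u i) + |lam i| * euclNorm (F *ᵥ u i)) / (μ0 * euclNorm (u i)) := by
        gcongr
    _ = (1 / μ0) * (euclNorm (E *ᵥ u i) / euclNorm (u i)
          + |lam i| * (euclNorm (F *ᵥ u i) / euclNorm (u i))) := by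
        field_simp
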